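/- Let n ≥ 1 be an integer and let ξ ∈ ℂ satisfy ξ² = −2 − √(n²+4), where √(n²+4) denotes the positive real square root. Then the minimal polynomial of ξ over ℚ is X⁴ + 4X² − n²; in particular ξ has degree 4 over ℚ. -/
import Mathlib


open Polynomial

/-- Let `n ≥ 1` and let `ξ ∈ ℂ` satisfy `ξ² = −2 − √(n²+4)` (positive real square root).
Then the minimal polynomial of `ξ` over `ℚ` is `X⁴ + 4X² − n²`; in particular `ξ` has
degree `4` over `ℚ`. -/
theorem stmt_13 (n : ℕ) (hn : 1 ≤ n) (ξ : ℂ)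
    (hξ : ξ ^ 2 = -2 - ((Real.sqrt ((n : ℝ) ^ 2 + 4) : ℝ) : ℂ)) :
    minpoly ℚ ξ = X ^ 4 + C 4 * X ^ 2 - C ((n : ℚ) ^ 2) ∧
    (minpoly ℚ ξ).natDegree = 4 := by
  set s : ℝ := Real.sqrt ((n : ℝ) ^ 2 + 4) with hs_def
  have hsnn : 0 ≤ s := Real.sqrt_nonneg _
  have hs2 : s ^ 2 = (n : ℝ) ^ 2 + 4 := Real.sq_sqrt (by positivity)
  -- irrationality of s
  have hnsq : ¬ IsSquare (n ^ 2 + 4) := by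
    rintro ⟨m, hm⟩
    have h1 : n < m := by nlinarith
    have h2 : m < n + 2 := by nlinarith
    have h3 : m = n + 1 := by omega
    subst h3
    have he : n ^ 2 = n * n := sq n
    have he2 : (n + 1) * (n + 1) = n * n + 2 * n + 1 := by ring
    omega
  have hirr : Irrational s := by
    have : ((n : ℝ) ^ 2 + 4) = ((n ^ 2 + 4 : ℕ) : ℝ) := by push_cast; ring
    rw [hs_def, this]
    exact irrational_sqrt_natCast_iff.mpr hnsq
  have hsc : ((s : ℂ)) ^ 2 = (n : ℂ) ^ 2 + 4 := by
    rw [← Complex.ofReal_pow, hs2]; push_cast; ring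
  set p : ℚ[X] := X ^ 4 + C 4 * X ^ 2 - C ((n : ℚ) ^ 2) with hp_def
  have hpmonic : p.Monic := by
    unfold p; monicity!
  have hpdeg : p.natDegree = 4 := by
    unfold p; compute_degree!
  have hroot : aeval ξ p = 0 := by
    simp only [hp_def, map_add, map_sub, map_mul, map_pow, aeval_X, aeval_C,
      map_ofNat, map_natCast]
    push_cast
    linear_combination (ξ ^ 2 - 2 - (s : ℂ)) * hξ + 4 * hξ + hsc
  have hint : IsIntegral ℚ ξ := ⟨p, hpmonic, hroot⟩
  have hdvd : minpoly ℚ ξ ∣ p := minpoly.dvd ℚ ξ hroot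
  have hmmonic : (minpoly ℚ ξ).Monic := minpoly.monic hint
  have hle : (minpoly ℚ ξ).natDegree ≤ 4 := by
    rw [← hpdeg]; exact natDegree_le_of_dvd hdvd hpmonic.ne_zero
  have hpos : 0 < (minpoly ℚ ξ).natDegree := minpoly.natDegree_pos hint
  -- a rational cannot be a root of p
  have hnoratroot : ∀ a : ℚ, p.eval a ≠ 0 := by
    intro a ha
    apply hirr
    refine ⟨a ^ 2 + 2, ?_⟩
    have ha' : (a : ℝ) ^ 4 + 4 * (a : ℝ) ^ 2 - (n : ℝ) ^ 2 = 0 := by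
      have : a ^ 4 + 4 * a ^ 2 - (n : ℚ) ^ 2 = 0 := by
        simpa [hp_def] using ha
      exact_mod_cast congrArg (Rat.cast : ℚ → ℝ) this
    have h1 : ((a : ℝ) ^ 2 + 2) ^ 2 = (n : ℝ) ^ 2 + 4 := by nlinarith
    have : s = (a : ℝ) ^ 2 + 2 := by
      rw [hs_def, ← h1, Real.sqrt_sq (by positivity)]
    rw [this]; push_cast; ring
  -- degree cannot be 1
  have hne1 : (minpoly ℚ ξ).natDegree ≠ 1 := by
    intro h1
    obtain ⟨c, hc⟩ := (minpoly.natDegree_eq_one_iff).mp h1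
    have : ((c : ℝ) : ℂ) ^ 2 = -2 - (s : ℂ) := by
      rw [show ((c : ℝ) : ℂ) = algebraMap ℚ ℂ c by push_cast; rfl, hc]; exact hξ
    have h2 : (((c : ℝ) ^ 2 : ℝ) : ℂ) = ((-2 - s : ℝ) : ℂ) := by
      push_cast
      rw [← this]
      push_cast
      ring
    have h3 : ((c : ℝ) ^ 2 : ℝ) = -2 - s := Complex.ofReal_inj.mp h2
    nlinarith [sq_nonneg (c : ℝ)]
  -- degree cannot be 2
  have hne2 : (minpoly ℚ ξ).natDegree ≠ 2 := by
    intro h2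
    set m := minpoly ℚ ξ with hm_def
    have hev : aeval ξ m = 0 := minpoly.aeval ℚ ξ
    rw [aeval_eq_sum_range, h2] at hev
    have hc2 : m.coeff 2 = 1 := by
      have := hmmonic.leadingCoeff
      rwa [leadingCoeff, h2] at this
    rw [Finset.sum_range_succ, Finset.sum_range_succ, Finset.sum_range_succ,
      Finset.sum_range_zero, hc2] at hev
    simp only [zero_add, one_smul, pow_zero, pow_one] at hev
    -- hev : m.coeff 0 • 1 + m.coeff 1 • ξ + ξ ^ 2 = 0
    set b := m.coeff 1
    set c := m.coeff 0
    have hbc : (c : ℂ) + (b : ℂ) * ξ + ξ ^ 2 = 0 := by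
      simpa [Rat.smul_def] using hev
    by_cases hb : b = 0
    · rw [hb] at hbc
      have : (s : ℂ) = ((c : ℂ) - 2) := by
        push_cast at hbc
        linear_combination hξ - hbc
      apply hirr
      refine ⟨c - 2, ?_⟩
      have : ((s : ℝ) : ℂ) = (((c - 2 : ℚ) : ℝ) : ℂ) := by
        rw [this]; push_cast; ring
      exact_mod_cast (Complex.ofReal_inj.mp this).symm
    · have hbr : ((b : ℝ)) ≠ 0 := by exact_mod_cast hb
      have hbc' : (((b : ℝ)) : ℂ) ≠ 0 := by exact_mod_cast hb
      have hξr : ξ = (((2 + s - (c : ℝ)) / (b : ℝ) : ℝ) : ℂ) := by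
        rw [Complex.ofReal_div, eq_div_iff hbc']
        push_cast
        linear_combination hbc - hξ
      have h2 : ((((2 + s - (c : ℝ)) / (b : ℝ)) ^ 2 : ℝ) : ℂ) = ((-2 - s : ℝ) : ℂ) := by
        push_cast
        rw [← hξ, hξr]
        push_cast
        ring
      have h' : ((2 + s - (c : ℝ)) / (b : ℝ)) ^ 2 = -2 - s := Complex.ofReal_inj.mp h2
      nlinarith [sq_nonneg ((2 + s - (c : ℝ)) / (b : ℝ))]
  -- degree cannot be 3
  have hne3 : (minpoly ℚ ξ).natDegree ≠ 3 := by
    intro h3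
    obtain ⟨q, hq⟩ := hdvd
    have hqmonic : q.Monic := by
      have := hpmonic
      rw [hq] at this
      exact hmmonic.of_mul_monic_left this
    have hqdeg : q.natDegree = 1 := by
      have := hpdeg
      rw [hq, natDegree_mul hmmonic.ne_zero hqmonic.ne_zero, h3] at this
      omega
    have hqeq : q = X + C (q.coeff 0) := hqmonic.eq_X_add_C hqdeg
    apply hnoratroot (-(q.coeff 0))
    rw [hq, eval_mul, hqeq]
    simp
  interval_cases h : (minpoly ℚ ξ).natDegree
  · omega
  · omega
  · omega
  · have heq := eq_of_monic_of_dvd_of_natDegree_le hmmonic hpmonic hdvd (by omega)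
    exact ⟨heq.symm, by omega⟩
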